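/- Let d ≥ 2 and g, h ∈ SL(d, ℝ). Suppose g = k_g D_g k_g' and h = k_h D_h k_h' are singular value decompositions, where the k's are orthogonal d × d matrices and D_g, D_h are diagonal with decreasing positive entries. Then σ₁(gh)/(σ₁(g) σ₁(h)) ≤ σ₂(g)/σ₁(g) + σ₂(h)/σ₁(h) + (σ₂(g)/σ₁(g)) · (σ₂(h)/σ₁(h)) + √(1 − ⟨k_g' k_h e₁, e_d⟩²). -/

import Mathlib

open Matrix

/-- The list of singular values of a real square matrix, in decreasing order
(the square roots of the eigenvalues of `Aᴴ * A`). -/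
noncomputable def svalList {n : Type*} [Fintype n] [DecidableEq n]
    (A : Matrix n n ℝ) : List ℝ :=
  (Multiset.sort
    (Finset.univ.val.map fun i =>
      Real.sqrt ((Matrix.isHermitian_conjTranspose_mul_self A).eigenvalues i)) (· ≤ ·)).reverse

/-- `sval j A` is the `j`-th largest singular value `σⱼ(A)` of `A` (1-indexed). -/
noncomputable def sval {n : Type*} [Fintype n] [DecidableEq n]
    (j : ℕ) (A : Matrix n n ℝ) : ℝ :=
  (svalList A).getD (j - 1) 0

section L2Aux

open scoped Matrix.Norms.L2Operator

variable {d : ℕ}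

lemma l2norm_le_bound (A : Matrix (Fin d) (Fin d) ℝ) {c : ℝ} (hc : 0 ≤ c)
    (h : ∀ x : EuclideanSpace ℝ (Fin d),
      ‖(EuclideanSpace.equiv (Fin d) ℝ).symm (A *ᵥ x)‖ ≤ c * ‖x‖) : ‖A‖ ≤ c := by
  rw [Matrix.l2_opNorm_def]
  exact ContinuousLinearMap.opNorm_le_bound _ hc fun x => by
    simpa [Matrix.toEuclideanLin_apply] using h x

lemma l2norm_diagonal_le {v : Fin d → ℝ} {c : ℝ} (hc : 0 ≤ c) (h : ∀ i, |v i| ≤ c) :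
    ‖(Matrix.diagonal v : Matrix (Fin d) (Fin d) ℝ)‖ ≤ c := by
  apply l2norm_le_bound _ hc
  intro x
  rw [EuclideanSpace.norm_eq, EuclideanSpace.norm_eq]
  rw [← Real.sqrt_sq hc, ← Real.sqrt_mul (sq_nonneg c)]
  apply Real.sqrt_le_sqrt
  rw [Finset.mul_sum]
  apply Finset.sum_le_sum
  intro i _
  have he : ((EuclideanSpace.equiv (Fin d) ℝ).symm (Matrix.diagonal v *ᵥ x) :
      EuclideanSpace ℝ (Fin d)) i = v i * x i := by
    simp [Matrix.mulVec_diagonal, EuclideanSpace.equiv]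
  simp only [he, Real.norm_eq_abs, sq_abs, mul_pow]
  have : (v i)^2 ≤ c^2 := by
    rw [← sq_abs (v i)]
    exact pow_le_pow_left₀ (abs_nonneg _) (h i) 2
  nlinarith [sq_nonneg (x i)]

lemma l2norm_one (hd : 0 < d) : ‖(1 : Matrix (Fin d) (Fin d) ℝ)‖ = 1 := by
  have h := Matrix.l2_opNorm_conjTranspose_mul_self (1 : Matrix (Fin d) (Fin d) ℝ)
  rw [conjTranspose_one, mul_one] at h
  have hne : ‖(1 : Matrix (Fin d) (Fin d) ℝ)‖ ≠ 0 := by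
    rw [norm_ne_zero_iff]
    intro h0
    have := congrFun (congrFun h0 ⟨0, hd⟩) ⟨0, hd⟩
    simp [Matrix.one_apply] at this
  exact (mul_left_cancel₀ hne (by rw [← h, mul_one])).symm

lemma l2norm_orth (hd : 0 < d) {U : Matrix (Fin d) (Fin d) ℝ} (hU : U * Uᵀ = 1) : ‖U‖ = 1 := by
  have hH : Uᴴ = Uᵀ := by ext i j; simp [conjTranspose_apply]
  have h := Matrix.l2_opNorm_conjTranspose_mul_self U
  rw [hH, mul_eq_one_comm.mp hU, l2norm_one hd] at h
  rcases mul_self_eq_one_iff.mp h.symm with h1 | h1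
  · exact h1
  · nlinarith [norm_nonneg U]

lemma sval_one_le_l2norm (hd : 0 < d) (A : Matrix (Fin d) (Fin d) ℝ) : sval 1 A ≤ ‖A‖ := by
  have key : ∀ i : Fin d,
      Real.sqrt ((Matrix.isHermitian_conjTranspose_mul_self A).eigenvalues i) ≤ ‖A‖ := by
    intro i
    have hmem := (Matrix.isHermitian_conjTranspose_mul_self A).eigenvalues_mem_spectrum_real i
    have hb := spectrum.norm_le_norm_mul_of_mem hmem
    rw [l2norm_one hd, mul_one] at hb
    rw [Matrix.l2_opNorm_conjTranspose_mul_self A] at hb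
    calc Real.sqrt ((Matrix.isHermitian_conjTranspose_mul_self A).eigenvalues i)
        ≤ Real.sqrt (‖A‖ * ‖A‖) := by
          apply Real.sqrt_le_sqrt
          calc _ ≤ |(Matrix.isHermitian_conjTranspose_mul_self A).eigenvalues i| := le_abs_self _
            _ ≤ ‖A‖ * ‖A‖ := by simpa [Real.norm_eq_abs] using hb
      _ = ‖A‖ := Real.sqrt_mul_self (norm_nonneg A)
  have hmem : ∀ x ∈ svalList A, x ≤ ‖A‖ := by
    intro x hx
    rw [svalList, List.mem_reverse, Multiset.mem_sort, Multiset.mem_map] at hx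
    obtain ⟨i, _, hi⟩ := hx
    rw [← hi]; exact key i
  have hlen : 0 < (svalList A).length := by simp [svalList]; omega
  rw [sval, List.getD_eq_getElem _ _ (by simpa using hlen)]
  exact hmem _ (List.getElem_mem _)

/-- Let `d ≥ 2` and `g, h ∈ SL(d, ℝ)` with singular value decompositions
`g = k_g D_g k_g'` and `h = k_h D_h k_h'`.  Then
`σ₁(gh)/(σ₁(g)σ₁(h)) ≤ σ₂(g)/σ₁(g) + σ₂(h)/σ₁(h) + (σ₂(g)/σ₁(g))(σ₂(h)/σ₁(h))
  + √(1 − ⟨k_g' k_h e₁, e_d⟩²)`. -/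
theorem sigma_one_mul_upper_bound
    (d : ℕ) (hd : 2 ≤ d)
    (g h : Matrix (Fin d) (Fin d) ℝ) (hgdet : g.det = 1) (hhdet : h.det = 1)
    (kg kg' kh kh' : Matrix (Fin d) (Fin d) ℝ)
    (hkg : kg * kgᵀ = 1) (hkg' : kg' * kg'ᵀ = 1)
    (hkh : kh * khᵀ = 1) (hkh' : kh' * kh'ᵀ = 1)
    (Dg Dh : Fin d → ℝ)
    (hDgpos : ∀ i, 0 < Dg i) (hDganti : ∀ i j : Fin d, i ≤ j → Dg j ≤ Dg i)
    (hDhpos : ∀ i, 0 < Dh i) (hDhanti : ∀ i j : Fin d, i ≤ j → Dh j ≤ Dh i)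
    (hgdec : g = kg * Matrix.diagonal Dg * kg')
    (hhdec : h = kh * Matrix.diagonal Dh * kh') :
    sval 1 (g * h) / (Dg ⟨0, by omega⟩ * Dh ⟨0, by omega⟩) ≤
      Dg ⟨1, by omega⟩ / Dg ⟨0, by omega⟩ + Dh ⟨1, by omega⟩ / Dh ⟨0, by omega⟩ +
        (Dg ⟨1, by omega⟩ / Dg ⟨0, by omega⟩) * (Dh ⟨1, by omega⟩ / Dh ⟨0, by omega⟩) +
        Real.sqrt (1 - ((kg' * kh) ⟨d - 1, by omega⟩ ⟨0, by omega⟩) ^ 2) := by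
  have hd0 : 0 < d := by omega
  have hd1 : 1 < d := by omega
  have hdd : d - 1 < d := by omega
  set i0 : Fin d := ⟨0, hd0⟩ with hi0def
  set i1 : Fin d := ⟨1, hd1⟩ with hi1def
  set idm : Fin d := ⟨d - 1, hdd⟩ with hidmdef
  set M : Matrix (Fin d) (Fin d) ℝ := kg' * kh with hMdef
  set a := Dg i0
  set a' := Dg i1
  set b := Dh i0
  set b' := Dh i1
  set s := Real.sqrt (1 - (M idm i0) ^ 2) with hsdef
  have ha : 0 < a := hDgpos i0
  have ha' : 0 < a' := hDgpos i1
  have hb : 0 < b := hDhpos i0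
  have hb' : 0 < b' := hDhpos i1
  have hs0 : 0 ≤ s := Real.sqrt_nonneg _
  -- orthogonality of M
  have h1 : kg'ᵀ * kg' = 1 := mul_eq_one_comm.mp hkg'
  have h2 : khᵀ * kh = 1 := mul_eq_one_comm.mp hkh
  have hMorth : Mᵀ * M = 1 := by
    rw [hMdef, Matrix.transpose_mul, Matrix.mul_assoc, ← Matrix.mul_assoc kg'ᵀ, h1,
      Matrix.one_mul, h2]
  -- column norm one
  have hcol : ∑ k, M k i0 ^ 2 = 1 := by
    have := congrFun (congrFun hMorth i0) i0
    simpa [Matrix.mul_apply, Matrix.one_apply, sq] using this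
  have hne : i0 ≠ idm := by
    simp only [hi0def, hidmdef, ne_eq, Fin.mk.injEq]
    omega
  have hsum2 : M i0 i0 ^ 2 + M idm i0 ^ 2 ≤ 1 := by
    have hsub : ({i0, idm} : Finset (Fin d)).sum (fun k => M k i0 ^ 2) ≤ ∑ k, M k i0 ^ 2 :=
      Finset.sum_le_sum_of_subset_of_nonneg (Finset.subset_univ _) fun _ _ _ => sq_nonneg _
    rw [Finset.sum_pair hne] at hsub
    linarith
  have habs : |M i0 i0| ≤ s := by
    rw [← Real.sqrt_sq_eq_abs, hsdef]
    exact Real.sqrt_le_sqrt (by linarith)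
  -- splitting the diagonal matrices
  set pg : Fin d → ℝ := fun i => if i = i0 then Dg i0 else 0 with hpgdef
  set rg : Fin d → ℝ := fun i => if i = i0 then 0 else Dg i with hrgdef
  set qh : Fin d → ℝ := fun i => if i = i0 then Dh i0 else 0 with hqhdef
  set sh : Fin d → ℝ := fun i => if i = i0 then 0 else Dh i with hshdef
  have hsplitg : Matrix.diagonal Dg = Matrix.diagonal pg + Matrix.diagonal rg := by
    have hfun : Dg = pg + rg := by
      funext i
      by_cases hi : i = i0 <;> simp [hpgdef, hrgdef, hi]
    rw [hfun, Matrix.diagonal_add]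
    rfl
  have hsplith : Matrix.diagonal Dh = Matrix.diagonal qh + Matrix.diagonal sh := by
    have hfun : Dh = qh + sh := by
      funext i
      by_cases hi : i = i0 <;> simp [hqhdef, hshdef, hi]
    rw [hfun, Matrix.diagonal_add]
    rfl
  -- norm bounds on pieces
  have hPg : ‖Matrix.diagonal pg‖ ≤ a := by
    apply l2norm_diagonal_le ha.le
    intro i
    by_cases hi : i = i0 <;> simp [hpgdef, hi, abs_of_pos ha, ha.le] <;> exact (abs_of_pos ha).le
  have hQh : ‖Matrix.diagonal qh‖ ≤ b := by
    apply l2norm_diagonal_le hb.le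
    intro i
    by_cases hi : i = i0 <;> simp [hqhdef, hi, abs_of_pos hb, hb.le] <;> exact (abs_of_pos hb).le
  have hRg : ‖Matrix.diagonal rg‖ ≤ a' := by
    apply l2norm_diagonal_le ha'.le
    intro i
    by_cases hi : i = i0
    · simp [hrgdef, hi, ha'.le]
    · have h1i : i1 ≤ i := by
        rw [Fin.le_def]
        have : i.val ≠ 0 := fun h0 => hi (Fin.ext h0)
        simp only [hi1def]
        omega
      have := hDganti i1 i h1i
      rw [hrgdef]
      simp only [hi, if_false]
      rw [abs_of_pos (hDgpos i)]
      exact this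
  have hSh : ‖Matrix.diagonal sh‖ ≤ b' := by
    apply l2norm_diagonal_le hb'.le
    intro i
    by_cases hi : i = i0
    · simp [hshdef, hi, hb'.le]
    · have h1i : i1 ≤ i := by
        rw [Fin.le_def]
        have : i.val ≠ 0 := fun h0 => hi (Fin.ext h0)
        simp only [hi1def]
        omega
      have := hDhanti i1 i h1i
      rw [hshdef]
      simp only [hi, if_false]
      rw [abs_of_pos (hDhpos i)]
      exact this
  have hMn : ‖M‖ = 1 := l2norm_orth hd0 (mul_eq_one_comm.mp hMorth)
  have hkgn : ‖kg‖ = 1 := l2norm_orth hd0 hkg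
  have hkh'n : ‖kh'‖ = 1 := l2norm_orth hd0 hkh'
  -- the corner piece
  have hPMQ : Matrix.diagonal pg * M * Matrix.diagonal qh =
      Matrix.diagonal (fun i => if i = i0 then Dg i0 * M i0 i0 * Dh i0 else 0) := by
    ext i j
    rw [Matrix.mul_diagonal, Matrix.diagonal_mul, Matrix.diagonal_apply]
    by_cases hi : i = i0 <;> by_cases hj : j = i0 <;>
      simp [hpgdef, hqhdef, hi, hj, eq_comm]
  have hPMQn : ‖Matrix.diagonal pg * M * Matrix.diagonal qh‖ ≤ a * b * s := by
    rw [hPMQ]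
    apply l2norm_diagonal_le (by positivity)
    intro i
    by_cases hi : i = i0
    · rw [hi, if_pos rfl]
      rw [abs_mul, abs_mul, abs_of_pos ha, abs_of_pos hb]
      calc a * |M i0 i0| * b ≤ a * s * b :=
            mul_le_mul_of_nonneg_right (mul_le_mul_of_nonneg_left habs ha.le) hb.le
        _ = a * b * s := by ring
    · simp only [hi, if_false]
      simp
      positivity
  -- assembling
  have hgh : g * h = kg * (Matrix.diagonal Dg * M * Matrix.diagonal Dh) * kh' := by
    rw [hgdec, hhdec, hMdef]
    simp only [Matrix.mul_assoc]
  have h5 : ‖g * h‖ ≤ ‖Matrix.diagonal Dg * M * Matrix.diagonal Dh‖ := by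
    rw [hgh]
    calc ‖kg * (Matrix.diagonal Dg * M * Matrix.diagonal Dh) * kh'‖
        ≤ ‖kg * (Matrix.diagonal Dg * M * Matrix.diagonal Dh)‖ * ‖kh'‖ :=
          Matrix.l2_opNorm_mul _ _
      _ ≤ ‖kg‖ * ‖Matrix.diagonal Dg * M * Matrix.diagonal Dh‖ * ‖kh'‖ :=
          mul_le_mul_of_nonneg_right (Matrix.l2_opNorm_mul _ _) (norm_nonneg _)
      _ = ‖Matrix.diagonal Dg * M * Matrix.diagonal Dh‖ := by
          rw [hkgn, hkh'n, one_mul, mul_one]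
  have hexp : Matrix.diagonal Dg * M * Matrix.diagonal Dh =
      Matrix.diagonal pg * M * Matrix.diagonal qh + Matrix.diagonal pg * M * Matrix.diagonal sh +
      Matrix.diagonal rg * M * Matrix.diagonal qh +
      Matrix.diagonal rg * M * Matrix.diagonal sh := by
    rw [hsplitg, hsplith]
    noncomm_ring
  have bound : ∀ (X Y : Matrix (Fin d) (Fin d) ℝ) (cx cy : ℝ), ‖X‖ ≤ cx → ‖Y‖ ≤ cy →
      0 ≤ cx → 0 ≤ cy → ‖X * M * Y‖ ≤ cx * cy := by
    intro X Y cx cy hX hY hcx hcy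
    calc ‖X * M * Y‖ ≤ ‖X * M‖ * ‖Y‖ := Matrix.l2_opNorm_mul _ _
      _ ≤ ‖X‖ * ‖M‖ * ‖Y‖ :=
          mul_le_mul_of_nonneg_right (Matrix.l2_opNorm_mul _ _) (norm_nonneg _)
      _ ≤ cx * cy := by
          rw [hMn, mul_one]
          exact mul_le_mul hX hY (norm_nonneg _) hcx
  have h6 : ‖Matrix.diagonal Dg * M * Matrix.diagonal Dh‖ ≤ a * b * s + a * b' + a' * b + a' * b' := by
    rw [hexp]
    have e2 := bound _ _ a b' hPg hSh ha.le hb'.le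
    have e3 := bound _ _ a' b hRg hQh ha'.le hb.le
    have e4 := bound _ _ a' b' hRg hSh ha'.le hb'.le
    calc ‖_ + _ + _ + _‖
        ≤ ‖Matrix.diagonal pg * M * Matrix.diagonal qh + Matrix.diagonal pg * M * Matrix.diagonal sh +
            Matrix.diagonal rg * M * Matrix.diagonal qh‖ +
            ‖Matrix.diagonal rg * M * Matrix.diagonal sh‖ := norm_add_le _ _
      _ ≤ (‖Matrix.diagonal pg * M * Matrix.diagonal qh + Matrix.diagonal pg * M * Matrix.diagonal sh‖ +
            ‖Matrix.diagonal rg * M * Matrix.diagonal qh‖) +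
            ‖Matrix.diagonal rg * M * Matrix.diagonal sh‖ := by
          gcongr
          exact norm_add_le _ _
      _ ≤ ((‖Matrix.diagonal pg * M * Matrix.diagonal qh‖ + ‖Matrix.diagonal pg * M * Matrix.diagonal sh‖) +
            ‖Matrix.diagonal rg * M * Matrix.diagonal qh‖) +
            ‖Matrix.diagonal rg * M * Matrix.diagonal sh‖ := by
          gcongr
          exact norm_add_le _ _
      _ ≤ a * b * s + a * b' + a' * b + a' * b' := by
          have := hPMQn
          linarith
  have hfin : sval 1 (g * h) ≤ a * b * s + a * b' + a' * b + a' * b' :=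
    le_trans (sval_one_le_l2norm hd0 _) (h5.trans h6)
  have hab : (0:ℝ) < a * b := by positivity
  rw [div_le_iff₀ hab]
  calc sval 1 (g * h) ≤ a * b * s + a * b' + a' * b + a' * b' := hfin
    _ = (a' / a + b' / b + a' / a * (b' / b) + s) * (a * b) := by
        field_simp
        ring

end L2Aux
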